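/- Let G be a connected multigraph on {0,...,n} with root 0, and let O be an acyclic orientation of G in which 0 is the unique source. Then the sequence (indeg_O(1) − 1, ..., indeg_O(n) − 1) is a maximal G-parking function, and this map from acyclic orientations with unique source 0 to maximal G-parking functions is a bijection. -/

import Mathlib

/-- For a multigraph on `{0,…,n}` encoded by a symmetric weight function `wt`
(root `0`, nonroot vertex `i : Fin n` is `i.succ`), `dU wt U i` is the total
weight of edges from `i` to vertices outside `U`. -/
def dU (n : ℕ) (wt : Fin (n + 1) → Fin (n + 1) → ℕ) (U : Finset (Fin n)) (i : Fin n) : ℕ :=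
  ∑ j ∈ (U.image Fin.succ)ᶜ, wt i.succ j

/-- `b` is a `G`-parking function: every nonempty set `U` of nonroot vertices
contains `i` with `b i < dU wt U i`. -/
def IsGPF (n : ℕ) (wt : Fin (n + 1) → Fin (n + 1) → ℕ) (b : Fin n → ℕ) : Prop :=
  ∀ U : Finset (Fin n), U.Nonempty → ∃ i ∈ U, b i < dU n wt U i

/-- `b` is a maximal `G`-parking function (w.r.t. the coordinatewise order). -/
def IsMaxGPF (n : ℕ) (wt : Fin (n + 1) → Fin (n + 1) → ℕ) (b : Fin n → ℕ) : Prop :=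
  IsGPF n wt b ∧ ∀ c : Fin n → ℕ, IsGPF n wt c → b ≤ c → c = b

/-- `O` is an orientation of the multigraph encoded by `wt`: every edge gets
exactly one direction, and only edges are oriented. -/
def IsOrient (n : ℕ) (wt : Fin (n + 1) → Fin (n + 1) → ℕ)
    (O : Fin (n + 1) → Fin (n + 1) → Bool) : Prop :=
  (∀ i j, wt i j ≠ 0 ↔ (O i j = true ∨ O j i = true)) ∧
    ∀ i j, O i j = true → O j i = false

/-- Weighted indegree of vertex `i` under orientation `O`. -/
def indeg (n : ℕ) (wt : Fin (n + 1) → Fin (n + 1) → ℕ)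
    (O : Fin (n + 1) → Fin (n + 1) → Bool) (i : Fin (n + 1)) : ℕ :=
  ∑ j, if O j i then wt j i else 0

/-- `O` is acyclic: no directed cycle. -/
def AcyclicO (n : ℕ) (O : Fin (n + 1) → Fin (n + 1) → Bool) : Prop :=
  ∀ i, ¬ Relation.TransGen (fun a b => O a b = true) i i

/-- The root `0` is the unique source (vertex of indegree `0`) of `O`. -/
def UniqueSource0 (n : ℕ) (wt : Fin (n + 1) → Fin (n + 1) → ℕ)
    (O : Fin (n + 1) → Fin (n + 1) → Bool) : Prop :=
  ∀ v, indeg n wt O v = 0 ↔ v = 0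

section AuxGPF

variable {n : ℕ}

lemma wf_of_acyclic {O : Fin (n+1) → Fin (n+1) → Bool} (hac : AcyclicO n O) :
    WellFounded (fun a b => O a b = true) := by
  have h2 : IsIrrefl (Fin (n+1)) (Relation.TransGen fun a b => O a b = true) := ⟨hac⟩
  have h1 : IsTrans (Fin (n+1)) (Relation.TransGen fun a b => O a b = true) :=
    ⟨fun _ _ _ => Relation.TransGen.trans⟩
  exact Subrelation.wf (r := Relation.TransGen fun a b => O a b = true) (fun h => Relation.TransGen.single h)
    (Finite.wellFounded_of_trans_of_irrefl (Relation.TransGen fun a b => O a b = true))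

lemma exists_min_elt {O : Fin (n+1) → Fin (n+1) → Bool} (hac : AcyclicO n O)
    (S : Finset (Fin (n+1))) (hS : S.Nonempty) :
    ∃ v ∈ S, ∀ u ∈ S, O u v = false := by
  obtain ⟨v, hv, hmin⟩ := (wf_of_acyclic hac).has_min S ⟨hS.choose, by simpa using hS.choose_spec⟩
  refine ⟨v, by simpa using hv, fun u hu => ?_⟩
  by_contra h
  exact hmin u (by simpa using hu) (by simpa using h)

lemma isGPF_indeg {wt : Fin (n+1) → Fin (n+1) → ℕ} {O : Fin (n+1) → Fin (n+1) → Bool}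
    (hsymm : ∀ i j, wt i j = wt j i) (hO : IsOrient n wt O) (hac : AcyclicO n O)
    (hsrc : UniqueSource0 n wt O) :
    IsGPF n wt (fun i => indeg n wt O i.succ - 1) := by
  intro U hU
  obtain ⟨v, hv, hmin⟩ := exists_min_elt hac (U.image Fin.succ) (hU.image _)
  obtain ⟨i, hi, rfl⟩ := Finset.mem_image.mp hv
  refine ⟨i, hi, ?_⟩
  have h1 : 1 ≤ indeg n wt O i.succ := by
    rcases Nat.eq_zero_or_pos (indeg n wt O i.succ) with h | h
    · exact absurd ((hsrc _).mp h) (Fin.succ_ne_zero i)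
    · exact h
  have h2 : indeg n wt O i.succ ≤ dU n wt U i := by
    unfold indeg dU
    calc ∑ j, (if O j i.succ then wt j i.succ else 0)
        = ∑ j ∈ (U.image Fin.succ)ᶜ, (if O j i.succ then wt j i.succ else 0) := by
          refine (Finset.sum_subset (Finset.subset_univ _) ?_).symm
          intro j _ hj
          simp only [Finset.mem_compl, not_not] at hj
          simp [hmin j hj]
      _ ≤ ∑ j ∈ (U.image Fin.succ)ᶜ, wt i.succ j := by
          refine Finset.sum_le_sum fun j _ => ?_
          rw [hsymm i.succ j]
          split <;> simp
  show indeg n wt O i.succ - 1 < dU n wt U i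
  omega

lemma two_mul_sum_indeg {wt : Fin (n+1) → Fin (n+1) → ℕ} {O : Fin (n+1) → Fin (n+1) → Bool}
    (hsymm : ∀ i j, wt i j = wt j i) (hO : IsOrient n wt O) :
    2 * ∑ v, indeg n wt O v = ∑ v : Fin (n+1), ∑ j, wt j v := by
  have key : ∀ v j, ((if O j v then wt j v else 0) + (if O v j then wt v j else 0)) = wt j v := by
    intro v j
    by_cases h1 : O j v = true
    · have h2 := hO.2 _ _ h1
      simp [h1, h2]
    · by_cases h2 : O v j = true
      · simp [h1, h2, hsymm j v]
      · have hw : wt j v = 0 := by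
          by_contra hw
          rcases (hO.1 j v).mp hw with h | h
          exacts [h1 h, h2 h]
        have hw2 : wt v j = 0 := (hsymm v j).trans hw
        simp [h1, h2, hw, hw2]
  unfold indeg
  rw [two_mul]
  nth_rewrite 2 [Finset.sum_comm]
  rw [← Finset.sum_add_distrib]
  refine Finset.sum_congr rfl fun v _ => ?_
  rw [← Finset.sum_add_distrib]
  exact Finset.sum_congr rfl fun j _ => key v j

lemma sum_indeg_eq {wt : Fin (n+1) → Fin (n+1) → ℕ} {O O' : Fin (n+1) → Fin (n+1) → Bool}
    (hsymm : ∀ i j, wt i j = wt j i) (hO : IsOrient n wt O) (hO' : IsOrient n wt O') :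
    ∑ v, indeg n wt O v = ∑ v, indeg n wt O' v := by
  have h1 := two_mul_sum_indeg hsymm hO
  have h2 := two_mul_sum_indeg hsymm hO'
  omega

lemma burn {wt : Fin (n+1) → Fin (n+1) → ℕ} {c : Fin n → ℕ} (hc : IsGPF n wt c)
    (U : Finset (Fin n)) : ∃ l : List (Fin n), l.Nodup ∧ l.toFinset = U ∧
      ∀ (t : ℕ) (ht : t < l.length),
        c (l.get ⟨t, ht⟩) < dU n wt (l.drop t).toFinset (l.get ⟨t, ht⟩) := by
  induction U using Finset.strongInduction with
  | _ U ih =>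
    rcases U.eq_empty_or_nonempty with rfl | hU
    · exact ⟨[], by simp, by simp, fun t ht => by simp at ht⟩
    · obtain ⟨i, hi, hlt⟩ := hc U hU
      obtain ⟨l', h1, h2, h3⟩ := ih (U.erase i) (Finset.erase_ssubset hi)
      refine ⟨i :: l', ?_, ?_, ?_⟩
      · refine List.nodup_cons.mpr ⟨fun h => ?_, h1⟩
        exact (Finset.notMem_erase i U) (h2 ▸ List.mem_toFinset.mpr h)
      · simp [h2, Finset.insert_erase hi]
      · intro t ht
        cases t with
        | zero =>
          simpa [h2, Finset.insert_erase hi] using hlt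
        | succ s =>
          exact h3 s (by simpa using ht)

lemma exists_orient {wt : Fin (n+1) → Fin (n+1) → ℕ} (hsymm : ∀ i j, wt i j = wt j i)
    (hloop : ∀ i, wt i i = 0) {c : Fin n → ℕ} (hc : IsGPF n wt c) :
    ∃ O, (IsOrient n wt O ∧ AcyclicO n O ∧ UniqueSource0 n wt O) ∧
      ∀ i : Fin n, c i < indeg n wt O i.succ := by
  classical
  obtain ⟨l, hnd, hl, hburn⟩ := burn hc Finset.univ
  have hmem : ∀ k : Fin n, k ∈ l := fun k => List.mem_toFinset.mp (hl ▸ Finset.mem_univ k)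
  set ρ : Fin (n+1) → ℕ := fun v => if h : v = 0 then 0 else l.idxOf (v.pred h) + 1 with hρ
  have hρ0 : ρ 0 = 0 := by simp [hρ]
  have hρs : ∀ k : Fin n, ρ k.succ = l.idxOf k + 1 := fun k => by
    simp [hρ, Fin.succ_ne_zero k]
  have hρinj : Function.Injective ρ := by
    intro a b hab
    rcases Fin.eq_zero_or_eq_succ a with rfl | ⟨a', rfl⟩ <;>
      rcases Fin.eq_zero_or_eq_succ b with rfl | ⟨b', rfl⟩
    · rfl
    · rw [hρ0, hρs] at hab; omega
    · rw [hρs, hρ0] at hab; omega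
    · rw [hρs, hρs] at hab
      have h := (List.idxOf_inj (y := b') (hmem a')).mp (by omega)
      rw [h]
  have hdrop : ∀ (k : Fin n) (t : ℕ), (k ∈ l.drop t ↔ t ≤ l.idxOf k) := by
    intro k t
    have hidx : l.idxOf k < l.length := List.idxOf_lt_length_iff.mpr (hmem k)
    have hgetk : l[l.idxOf k]'hidx = k := List.idxOf_get hidx
    constructor
    · intro hk
      by_contra hlt
      push_neg at hlt
      have htake : k ∈ l.take t := by
        have h1 : l.idxOf k < (l.take t).length := by
          rw [List.length_take]; omega
        have h4 : (l.take t)[l.idxOf k]'h1 = k := by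
          rw [List.getElem_take]; exact hgetk
        exact h4 ▸ List.getElem_mem h1
      exact (List.disjoint_take_drop hnd (le_refl t)) htake hk
    · intro ht
      have h2 : l.idxOf k - t < (l.drop t).length := by
        rw [List.length_drop]; omega
      have h3 : t + (l.idxOf k - t) = l.idxOf k := by omega
      have h4 : (l.drop t)[l.idxOf k - t]'h2 = k := by
        rw [List.getElem_drop]
        simp only [h3]
        exact hgetk
      exact h4 ▸ List.getElem_mem h2
  have hset : ∀ (t : ℕ),
      ((l.drop t).toFinset.image Fin.succ)ᶜ = Finset.univ.filter (fun j => ρ j < t + 1) := by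
    intro t
    ext j
    simp only [Finset.mem_compl, Finset.mem_image, Finset.mem_filter, Finset.mem_univ, true_and,
      List.mem_toFinset, not_exists, not_and]
    rcases Fin.eq_zero_or_eq_succ j with rfl | ⟨k, rfl⟩
    · constructor
      · intro _; rw [hρ0]; omega
      · intro _ x _ h; exact absurd h (Fin.succ_ne_zero x)
    · rw [hρs]
      constructor
      · intro h
        have hk : k ∉ l.drop t := fun hk => h k hk rfl
        have := (hdrop k t).not.mp hk
        omega
      · intro h x hx hxk
        have hxkeq : x = k := Fin.succ_injective _ hxk
        subst hxkeq
        have := (hdrop x t).mp hx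
        omega
  set O : Fin (n+1) → Fin (n+1) → Bool := fun a b => decide (wt a b ≠ 0 ∧ ρ a < ρ b) with hOdef
  have hOiff : ∀ a b, O a b = true ↔ (wt a b ≠ 0 ∧ ρ a < ρ b) := fun a b => by simp [hOdef]
  have hindeg : ∀ v, indeg n wt O v = ∑ j ∈ Finset.univ.filter (fun j => ρ j < ρ v), wt j v := by
    intro v
    rw [indeg, Finset.sum_filter]
    refine Finset.sum_congr rfl fun j _ => ?_
    by_cases hw : wt j v = 0
    · by_cases hr : ρ j < ρ v <;> simp [hOdef, hw, hr]
    · by_cases hr : ρ j < ρ v <;> simp [hOdef, hw, hr]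
  have hmain : ∀ i : Fin n, c i < indeg n wt O i.succ := by
    intro i
    have hidx : l.idxOf i < l.length := List.idxOf_lt_length_iff.mpr (hmem i)
    have hget : l.get ⟨l.idxOf i, hidx⟩ = i := List.idxOf_get hidx
    have hb := hburn (l.idxOf i) hidx
    rw [hget] at hb
    rw [hindeg, hρs]
    unfold dU at hb
    rw [hset (l.idxOf i)] at hb
    calc c i < ∑ j ∈ Finset.univ.filter (fun j => ρ j < l.idxOf i + 1), wt i.succ j := hb
      _ = ∑ j ∈ Finset.univ.filter (fun j => ρ j < l.idxOf i + 1), wt j i.succ :=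
          Finset.sum_congr rfl fun j _ => hsymm i.succ j
  refine ⟨O, ⟨⟨?_, ?_⟩, ?_, ?_⟩, hmain⟩
  · intro a b
    constructor
    · intro hw
      have hab : a ≠ b := fun h => hw (h ▸ hloop a)
      have hne : ρ a ≠ ρ b := fun h => hab (hρinj h)
      rcases lt_or_gt_of_ne hne with h | h
      · exact Or.inl ((hOiff a b).mpr ⟨hw, h⟩)
      · exact Or.inr ((hOiff b a).mpr ⟨fun h0 => hw ((hsymm a b).trans h0), h⟩)
    · rintro (h | h)
      · exact ((hOiff a b).mp h).1
      · exact fun h0 => ((hOiff b a).mp h).1 ((hsymm b a).trans h0)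
  · intro a b h
    have h1 := ((hOiff a b).mp h).2
    rw [Bool.eq_false_iff]
    intro h2
    exact absurd ((hOiff b a).mp h2).2 (by omega)
  · intro v hv
    have hmono : ∀ a b, Relation.TransGen (fun a b => O a b = true) a b → ρ a < ρ b := by
      intro a b h
      induction h with
      | single h => exact ((hOiff _ _).mp h).2
      | tail _ h ih => exact ih.trans ((hOiff _ _).mp h).2
    exact lt_irrefl _ (hmono v v hv)
  · intro v
    constructor
    · intro h
      by_contra hv0
      obtain ⟨k, rfl⟩ := (Fin.eq_zero_or_eq_succ v).resolve_left hv0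
      have := hmain k
      omega
    · rintro rfl
      rw [hindeg, hρ0, Finset.filter_false_of_mem (fun j _ => by omega), Finset.sum_empty]


lemma orient_inj {wt : Fin (n+1) → Fin (n+1) → ℕ} (hsymm : ∀ i j, wt i j = wt j i)
    {O O' : Fin (n+1) → Fin (n+1) → Bool}
    (hO : IsOrient n wt O) (hO' : IsOrient n wt O') (hacO : AcyclicO n O)
    (hind : ∀ v, indeg n wt O v = indeg n wt O' v) : O = O' := by
  classical
  set P : Fin (n+1) → Prop := fun v => ∃ u, O u v = true ∧ O' u v = false with hP
  have hsplit : ∀ v, ∑ j ∈ Finset.univ.filter (fun j => O j v = true ∧ O' j v = false), wt j v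
      = ∑ j ∈ Finset.univ.filter (fun j => O' j v = true ∧ O j v = false), wt j v := by
    intro v
    have e1 : indeg n wt O v
        = (∑ j ∈ Finset.univ.filter (fun j => O j v = true ∧ O' j v = true), wt j v)
        + ∑ j ∈ Finset.univ.filter (fun j => O j v = true ∧ O' j v = false), wt j v := by
      rw [indeg, Finset.sum_filter, Finset.sum_filter, ← Finset.sum_add_distrib]
      refine Finset.sum_congr rfl fun j _ => ?_
      cases hj : O j v <;> cases hj' : O' j v <;> simp [hj, hj']
    have e2 : indeg n wt O' v
        = (∑ j ∈ Finset.univ.filter (fun j => O j v = true ∧ O' j v = true), wt j v)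
        + ∑ j ∈ Finset.univ.filter (fun j => O' j v = true ∧ O j v = false), wt j v := by
      rw [indeg, Finset.sum_filter, Finset.sum_filter, ← Finset.sum_add_distrib]
      refine Finset.sum_congr rfl fun j _ => ?_
      cases hj : O j v <;> cases hj' : O' j v <;> simp [hj, hj']
    have := hind v
    omega
  have hstep : ∀ v, P v → ∃ u, O u v = true ∧ P u := by
    rintro v ⟨u, h1, h2⟩
    have hw : wt u v ≠ 0 := (hO.1 u v).mpr (Or.inl h1)
    have hw' : wt v u ≠ 0 := fun h0 => hw ((hsymm u v).trans h0)
    have h3 : O' v u = true := ((hO'.1 v u).mp hw').resolve_right fun h => by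
      rw [h2] at h; exact Bool.false_ne_true h
    have h4 : O v u = false := hO.2 u v h1
    have hpos : 0 < ∑ j ∈ Finset.univ.filter (fun j => O' j u = true ∧ O j u = false), wt j u := by
      have hv : v ∈ Finset.univ.filter (fun j => O' j u = true ∧ O j u = false) := by
        simp [h3, h4]
      calc 0 < wt v u := Nat.pos_of_ne_zero hw'
        _ ≤ _ := Finset.single_le_sum (f := fun j => wt j u) (fun j _ => Nat.zero_le _) hv
    rw [← hsplit u] at hpos
    have hex : ∃ j ∈ Finset.univ.filter (fun j => O j u = true ∧ O' j u = false), wt j u ≠ 0 := by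
      by_contra hco
      push_neg at hco
      rw [Finset.sum_eq_zero hco] at hpos
      exact lt_irrefl 0 hpos
    obtain ⟨j, hj, -⟩ := hex
    simp only [Finset.mem_filter, Finset.mem_univ, true_and] at hj
    exact ⟨u, h1, ⟨j, hj.1, hj.2⟩⟩
  have hnoP : ∀ v, ¬ P v := by
    intro v
    refine (wf_of_acyclic hacO).induction (C := fun v => ¬ P v) v ?_
    intro v ih hPv
    obtain ⟨u, hu, hPu⟩ := hstep v hPv
    exact ih u hu hPu
  funext a b
  cases ha : O a b <;> cases hb : O' a b
  · rfl
  · have hw : wt a b ≠ 0 := (hO'.1 a b).mpr (Or.inl hb)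
    have h5 : O b a = true := ((hO.1 a b).mp hw).resolve_left fun h => by
      rw [ha] at h; exact Bool.false_ne_true h
    have h6 : O' b a = false := hO'.2 a b hb
    exact absurd ⟨b, h5, h6⟩ (hnoP a)
  · exact absurd ⟨a, ha, hb⟩ (hnoP b)
  · rfl

theorem aux_main (n : ℕ) (wt : Fin (n + 1) → Fin (n + 1) → ℕ)
    (hsymm : ∀ i j, wt i j = wt j i) (hloop : ∀ i, wt i i = 0) :
    Set.BijOn (fun O (i : Fin n) => indeg n wt O i.succ - 1)
      {O | IsOrient n wt O ∧ AcyclicO n O ∧ UniqueSource0 n wt O}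
      {b | IsGPF n wt b ∧ ∀ c : Fin n → ℕ, IsGPF n wt c → b ≤ c → c = b} := by
  classical
  refine ⟨?_, ?_, ?_⟩
  · rintro O ⟨hO, hac, hsrc⟩
    refine ⟨isGPF_indeg hsymm hO hac hsrc, ?_⟩
    intro c hcGPF hle
    obtain ⟨O', ⟨hO'o, hO'a, hO's⟩, hlt⟩ := exists_orient hsymm hloop hcGPF
    have hsum := sum_indeg_eq hsymm hO hO'o
    have h0 : indeg n wt O 0 = 0 := (hsrc 0).mpr rfl
    have h0' : indeg n wt O' 0 = 0 := (hO's 0).mpr rfl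
    rw [Fin.sum_univ_succ, Fin.sum_univ_succ, h0, h0', zero_add, zero_add] at hsum
    have hge1 : ∀ i : Fin n, 1 ≤ indeg n wt O i.succ := fun i =>
      Nat.pos_of_ne_zero fun h => Fin.succ_ne_zero i ((hsrc _).mp h)
    have hge1' : ∀ i : Fin n, 1 ≤ indeg n wt O' i.succ := fun i =>
      Nat.pos_of_ne_zero fun h => Fin.succ_ne_zero i ((hO's _).mp h)
    have hs1 : ∑ i : Fin n, (indeg n wt O i.succ - 1) + ∑ _i : Fin n, 1
        = ∑ i : Fin n, indeg n wt O i.succ := by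
      rw [← Finset.sum_add_distrib]
      exact Finset.sum_congr rfl fun i _ => by have := hge1 i; omega
    have hs2 : ∑ i : Fin n, (indeg n wt O' i.succ - 1) + ∑ _i : Fin n, 1
        = ∑ i : Fin n, indeg n wt O' i.succ := by
      rw [← Finset.sum_add_distrib]
      exact Finset.sum_congr rfl fun i _ => by have := hge1' i; omega
    have hcle : ∀ i, c i ≤ indeg n wt O' i.succ - 1 := fun i => by have := hlt i; omega
    have hsc1 : ∑ i : Fin n, (indeg n wt O i.succ - 1) ≤ ∑ i : Fin n, c i :=
      Finset.sum_le_sum fun i _ => hle i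
    have hsc2 : ∑ i : Fin n, c i ≤ ∑ i : Fin n, (indeg n wt O' i.succ - 1) :=
      Finset.sum_le_sum fun i _ => hcle i
    have hseq : ∑ i : Fin n, (indeg n wt O i.succ - 1) = ∑ i : Fin n, c i := by omega
    have hpt := (Finset.sum_eq_sum_iff_of_le (fun i _ => hle i)).mp hseq
    funext i
    exact (hpt i (Finset.mem_univ i)).symm
  · rintro O ⟨hO, hac, hsrc⟩ O' ⟨hO', hac', hsrc'⟩ heq
    have hind : ∀ v, indeg n wt O v = indeg n wt O' v := by
      intro v
      rcases Fin.eq_zero_or_eq_succ v with rfl | ⟨i, rfl⟩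
      · rw [(hsrc 0).mpr rfl, (hsrc' 0).mpr rfl]
      · have h1 := congrFun heq i
        have hg : 1 ≤ indeg n wt O i.succ :=
          Nat.pos_of_ne_zero fun h => Fin.succ_ne_zero i ((hsrc _).mp h)
        have hg' : 1 ≤ indeg n wt O' i.succ :=
          Nat.pos_of_ne_zero fun h => Fin.succ_ne_zero i ((hsrc' _).mp h)
        simp only at h1
        omega
    exact orient_inj hsymm hO hO' hac hind
  · rintro c ⟨hcGPF, hcMax⟩
    obtain ⟨O', hO'mem, hlt⟩ := exists_orient hsymm hloop hcGPF
    refine ⟨O', hO'mem, ?_⟩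
    have hGPF' := isGPF_indeg hsymm hO'mem.1 hO'mem.2.1 hO'mem.2.2
    have hle : c ≤ fun i => indeg n wt O' i.succ - 1 := by
      intro i
      have := hlt i
      show c i ≤ indeg n wt O' i.succ - 1
      omega
    exact hcMax _ hGPF' hle

end AuxGPF

/-- `O ↦ (indeg_O(1) − 1, …, indeg_O(n) − 1)` maps acyclic orientations with
unique source `0` to maximal `G`-parking functions, bijectively. -/
theorem acyclicOrient_bij_maxGParking (n : ℕ) (wt : Fin (n + 1) → Fin (n + 1) → ℕ)
    (hsymm : ∀ i j, wt i j = wt j i) (hloop : ∀ i, wt i i = 0)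
    (hconn : (SimpleGraph.fromRel fun i j : Fin (n + 1) => wt i j ≠ 0).Connected) :
    Set.BijOn (fun O (i : Fin n) => indeg n wt O i.succ - 1)
      {O | IsOrient n wt O ∧ AcyclicO n O ∧ UniqueSource0 n wt O}
      {b | IsMaxGPF n wt b} := by
  exact aux_main n wt hsymm hloop
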